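/- For each k ∈ ℕ, N ∈ ℕ and parameters r, c > 0, the function u(x,t) = e^{k²c(t−r)+k x_n}/k^N on ℝⁿ×ℝ satisfies ∂u/∂t − c Δₙ u = 0; moreover for fixed x_n > 0 and t = r, u(x,r) = e^{k x_n}/k^N → +∞ as k → ∞, while for t ≤ r − δ (δ > 0 fixed), u(x,t) ≤ e^{−k²cδ + k x_n}/k^N → 0 as k → ∞, uniformly for x_n in any bounded interval. -/

import Mathlib

open Filter

/-- The Laplacian on ℝⁿ, as the sum of second partial derivatives. -/
noncomputable def lap {n : ℕ} (f : (Fin n → ℝ) → ℝ) (x : Fin n → ℝ) : ℝ :=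
  ∑ j, fderiv ℝ (fun y => fderiv ℝ f y (Pi.single j 1)) x (Pi.single j 1)

lemma key {n : ℕ} (j : Fin n) (A k b : ℝ) (y : Fin n → ℝ) :
    HasFDerivAt (fun y : Fin n → ℝ => Real.exp (A + k * y j) * b)
      ((Real.exp (A + k * y j) * b * k) • (ContinuousLinearMap.proj j : (Fin n → ℝ) →L[ℝ] ℝ)) y := by
  have h1 : HasFDerivAt (fun y : Fin n → ℝ => y j)
      (ContinuousLinearMap.proj j : (Fin n → ℝ) →L[ℝ] ℝ) y :=
    hasFDerivAt_apply j y
  have h2 := (h1.const_mul k).const_add A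
  have h3 := (h2.exp).mul_const b
  refine h3.congr_fderiv ?_
  ext v
  simp
  ring

lemma lap_eq {n : ℕ} (j : Fin n) (A k b : ℝ) (x : Fin n → ℝ) :
    lap (fun y : Fin n → ℝ => Real.exp (A + k * y j) * b) x
      = Real.exp (A + k * x j) * b * k * k := by
  unfold lap
  have hfd : ∀ (i : Fin n) (y : Fin n → ℝ),
      fderiv ℝ (fun y : Fin n → ℝ => Real.exp (A + k * y j) * b) y (Pi.single i 1)
        = Real.exp (A + k * y j) * (b * k * (if j = i then (1:ℝ) else 0)) := by
    intro i y
    rw [(key j A k b y).fderiv]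
    simp [Pi.single_apply]
    split <;> ring
  rw [Finset.sum_eq_single j]
  · have : (fun y : Fin n → ℝ =>
        fderiv ℝ (fun y : Fin n → ℝ => Real.exp (A + k * y j) * b) y (Pi.single j 1))
        = fun y : Fin n → ℝ => Real.exp (A + k * y j) * (b * k) := by
      funext y; rw [hfd]; simp
    rw [this, (key j A k (b * k) x).fderiv]
    simp only [ContinuousLinearMap.smul_apply, ContinuousLinearMap.proj_apply,
      Pi.single_eq_same, smul_eq_mul, mul_one]
    ring
  · intro i _ hij
    have : (fun y : Fin n → ℝ =>
        fderiv ℝ (fun y : Fin n → ℝ => Real.exp (A + k * y j) * b) y (Pi.single i 1))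
        = fun _ : Fin n → ℝ => (0 : ℝ) := by
      funext y; rw [hfd]; simp [Ne.symm hij]
    rw [this]
    simp
  · intro h; exact absurd (Finset.mem_univ j) h

/-- The instability example: u_k(x,t) = e^{k²c(t−r)+k xₙ}/k^N solves ∂u/∂t − cΔu = 0; at
t = r it blows up as k → ∞ for xₙ > 0, while for t ≤ r − δ it is dominated by
e^{−k²cδ+k xₙ}/k^N, which tends to 0 uniformly for xₙ in any bounded interval. -/
theorem illposedness_example (n : ℕ) (hn : 1 ≤ n) (N : ℕ) (c r : ℝ) (hc : 0 < c)
    (hr : 0 < r) :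
    (∀ k : ℕ, 1 ≤ k → ∀ (x : Fin n → ℝ) (t : ℝ),
        deriv (fun s =>
            Real.exp ((k : ℝ) ^ 2 * c * (s - r) + k * x ⟨n - 1, by omega⟩) / (k : ℝ) ^ N) t
          - c * lap (fun y =>
              Real.exp ((k : ℝ) ^ 2 * c * (t - r) + k * y ⟨n - 1, by omega⟩) / (k : ℝ) ^ N) x
          = 0)
    ∧ (∀ k : ℕ, 1 ≤ k → ∀ x : Fin n → ℝ,
        Real.exp ((k : ℝ) ^ 2 * c * (r - r) + k * x ⟨n - 1, by omega⟩) / (k : ℝ) ^ N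
          = Real.exp (k * x ⟨n - 1, by omega⟩) / (k : ℝ) ^ N)
    ∧ (∀ a : ℝ, 0 < a →
        Tendsto (fun k : ℕ => Real.exp ((k : ℝ) * a) / (k : ℝ) ^ N) atTop atTop)
    ∧ (∀ δ : ℝ, 0 < δ → ∀ k : ℕ, 1 ≤ k → ∀ (x : Fin n → ℝ) (t : ℝ), t ≤ r - δ →
        Real.exp ((k : ℝ) ^ 2 * c * (t - r) + k * x ⟨n - 1, by omega⟩) / (k : ℝ) ^ N
          ≤ Real.exp (-(k : ℝ) ^ 2 * c * δ + k * x ⟨n - 1, by omega⟩) / (k : ℝ) ^ N)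
    ∧ (∀ δ : ℝ, 0 < δ → ∀ M : ℝ,
        Tendsto (fun k : ℕ => Real.exp (-(k : ℝ) ^ 2 * c * δ + (k : ℝ) * M) / (k : ℝ) ^ N)
          atTop (nhds 0)) := by
  refine ⟨?_, ?_, ?_, ?_, ?_⟩
  · -- PDE
    intro k hk x t
    set j : Fin n := ⟨n - 1, by omega⟩
    simp only [div_eq_mul_inv]
    have h1 : HasDerivAt (fun s : ℝ => (k : ℝ) ^ 2 * c * (s - r) + k * x j)
        ((k : ℝ) ^ 2 * c) t := by
      simpa using (((hasDerivAt_id t).sub_const r).const_mul ((k : ℝ) ^ 2 * c)).add_const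
        ((k : ℝ) * x j)
    have h2 := (h1.exp).mul_const (((k : ℝ) ^ N)⁻¹)
    rw [h2.deriv, lap_eq j ((k : ℝ) ^ 2 * c * (t - r)) (k : ℝ) (((k : ℝ) ^ N)⁻¹) x]
    ring
  · intro k hk x
    norm_num
  · intro a ha
    have h1 := Real.tendsto_exp_div_pow_atTop N
    have h2 : Tendsto (fun x : ℝ => x * a) atTop atTop :=
      Tendsto.atTop_mul_const ha tendsto_id
    have h4 := (h1.comp h2).atTop_mul_const (pow_pos ha N)
    have hreal : Tendsto (fun x : ℝ => Real.exp (x * a) / x ^ N) atTop atTop := by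
      apply h4.congr'
      filter_upwards [eventually_gt_atTop (0 : ℝ)] with x hx
      have hx' : (x : ℝ) ^ N ≠ 0 := by positivity
      have ha' : (a : ℝ) ^ N ≠ 0 := by positivity
      simp only [Function.comp]
      rw [mul_pow]
      field_simp
    exact hreal.comp tendsto_natCast_atTop_atTop
  · intro δ hδ k hk x t ht
    have hk0 : (0 : ℝ) < (k : ℝ) := by exact_mod_cast hk
    have hkN : (0 : ℝ) < (k : ℝ) ^ N := pow_pos hk0 N
    apply div_le_div_of_nonneg_right ?_ hkN.le
    · apply Real.exp_le_exp.mpr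
      have : t - r ≤ -δ := by linarith
      nlinarith [sq_nonneg (k : ℝ), mul_nonneg (sq_nonneg (k : ℝ)) hc.le]
  · intro δ hδ M
    have hg : Tendsto (fun k : ℕ => Real.exp (-(k : ℝ))) atTop (nhds 0) :=
      Real.tendsto_exp_atBot.comp
        (tendsto_neg_atBot_iff.mpr tendsto_natCast_atTop_atTop)
    apply squeeze_zero' ?_ ?_ hg
    · filter_upwards with k
      positivity
    · filter_upwards [eventually_ge_atTop 1,
        eventually_ge_atTop ⌈(M + 1) / (c * δ)⌉₊] with k hk1 hk2
      have hk0 : (1 : ℝ) ≤ (k : ℝ) := by exact_mod_cast hk1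
      have hcd : 0 < c * δ := mul_pos hc hδ
      have hk2' : (M + 1) / (c * δ) ≤ (k : ℝ) :=
        le_trans (Nat.le_ceil _) (by exact_mod_cast hk2)
      have hMk : M + 1 ≤ (k : ℝ) * (c * δ) := by
        rw [div_le_iff₀ hcd] at hk2'; linarith
      have hexp : -(k : ℝ) ^ 2 * c * δ + (k : ℝ) * M ≤ -(k : ℝ) := by
        have h3 : (k : ℝ) * (M + 1) ≤ (k : ℝ) * ((k : ℝ) * (c * δ)) := by
          apply mul_le_mul_of_nonneg_left hMk (by linarith)
        nlinarith
      calc Real.exp (-(k : ℝ) ^ 2 * c * δ + (k : ℝ) * M) / (k : ℝ) ^ N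
          ≤ Real.exp (-(k : ℝ) ^ 2 * c * δ + (k : ℝ) * M) := by
            apply div_le_self (Real.exp_nonneg _) (one_le_pow₀ hk0)
        _ ≤ Real.exp (-(k : ℝ)) := Real.exp_le_exp.mpr hexp
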